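/- In the non-compliance SCM, the individual prescription effect factorizes as the product of the individual treatment effect and the individual compliance: IPE(x) = ITE(x)·γ(x), where IPE(x) = P(Y=1 | do(P:=1), X=x) − P(Y=1 | do(P:=0), X=x), ITE(x) = P(Y=1 | do(T:=1), X=x) − P(Y=1 | do(T:=0), X=x), and γ(x) = P(T=1 | do(P:=1), X=x). -/
import Mathlib


open Classical Finset

/-- Probability of an event in a finite probability space given by a mass function. -/
noncomputable def Pr {Ω : Type*} [Fintype Ω] (pr : Ω → ℝ) (A : Ω → Prop) : ℝ :=
  ∑ ω, if A ω then pr ω else 0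

/-- Conditional probability `P(A | B)`. -/
noncomputable def cPr {Ω : Type*} [Fintype Ω] (pr : Ω → ℝ) (A B : Ω → Prop) : ℝ :=
  Pr pr (fun ω => A ω ∧ B ω) / Pr pr B

section Aux
variable {Ω : Type*} [Fintype Ω] (pr : Ω → ℝ)

lemma Pr_congr {A B : Ω → Prop} (h : ∀ ω, A ω ↔ B ω) : Pr pr A = Pr pr B := by
  unfold Pr; exact Finset.sum_congr rfl fun ω _ => by rw [if_congr (h ω) rfl rfl]

lemma Pr_split (A E : Ω → Prop) :
    Pr pr E = Pr pr (fun ω => A ω ∧ E ω) + Pr pr (fun ω => ¬ A ω ∧ E ω) := by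
  unfold Pr
  rw [← Finset.sum_add_distrib]
  refine Finset.sum_congr rfl fun ω _ => ?_
  by_cases hA : A ω <;> by_cases hE : E ω <;> simp [hA, hE]

lemma Pr_true (hsum : ∑ ω, pr ω = 1) : Pr pr (fun _ => True) = 1 := by
  unfold Pr; simpa using hsum

lemma Pr_add_compl (hsum : ∑ ω, pr ω = 1) (A : Ω → Prop) :
    Pr pr A + Pr pr (fun ω => ¬ A ω) = 1 := by
  have := Pr_split pr A (fun _ => True)
  rw [Pr_true pr hsum] at this
  rw [this]
  congr 1 <;> exact Pr_congr pr (fun ω => by tauto)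

lemma Pr_const_and (c : Prop) (E : Ω → Prop) :
    Pr pr (fun ω => c ∧ E ω) = if c then Pr pr E else 0 := by
  by_cases hc : c
  · rw [if_pos hc]; exact Pr_congr pr fun ω => by tauto
  · rw [if_neg hc]; unfold Pr; simp [hc]

lemma Pr_decomp {α : Type*} (f : Ω → α) (E : Ω → Prop) :
    Pr pr E = ∑ v ∈ Finset.image f Finset.univ, Pr pr (fun ω => E ω ∧ f ω = v) := by
  unfold Pr
  rw [Finset.sum_comm]
  refine Finset.sum_congr rfl fun ω _ => ?_
  by_cases hE : E ω
  · simp only [hE, true_and]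
    rw [Finset.sum_ite_eq (Finset.image f Finset.univ) (f ω) (fun _ => pr ω)]
    simp [Finset.mem_image_of_mem]
  · simp [hE]

end Aux

section Indep
variable {Ω 𝒰 NXt NTt NYt : Type*} [Fintype Ω]
  (pr : Ω → ℝ) (hsum : ∑ ω, pr ω = 1)
  (NP : Ω → Bool) (NU : Ω → 𝒰) (NXn : Ω → NXt) (NTn : Ω → NTt) (NYn : Ω → NYt)
  (hindep : ∀ (a : Bool) (u : 𝒰) (nx : NXt) (nt : NTt) (ny : NYt),
      Pr pr (fun ω => NP ω = a ∧ NU ω = u ∧ NXn ω = nx ∧ NTn ω = nt ∧ NYn ω = ny)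
        = Pr pr (fun ω => NP ω = a) * Pr pr (fun ω => NU ω = u)
          * Pr pr (fun ω => NXn ω = nx) * Pr pr (fun ω => NTn ω = nt)
          * Pr pr (fun ω => NYn ω = ny))

include hsum hindep

lemma hindep4 (u : 𝒰) (nx : NXt) (nt : NTt) (ny : NYt) :
    Pr pr (fun ω => NU ω = u ∧ NXn ω = nx ∧ NTn ω = nt ∧ NYn ω = ny)
      = Pr pr (fun ω => NU ω = u) * Pr pr (fun ω => NXn ω = nx)
        * Pr pr (fun ω => NTn ω = nt) * Pr pr (fun ω => NYn ω = ny) := by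
  rw [Pr_split pr (fun ω => NP ω = true)]
  have h2 : (Pr pr fun ω => ¬NP ω = true ∧ NU ω = u ∧ NXn ω = nx ∧ NTn ω = nt ∧ NYn ω = ny)
      = Pr pr fun ω => NP ω = false ∧ NU ω = u ∧ NXn ω = nx ∧ NTn ω = nt ∧ NYn ω = ny :=
    Pr_congr pr fun ω => by simp
  rw [h2, hindep true, hindep false]
  have hcompl : (Pr pr fun ω => ¬NP ω = true) = Pr pr fun ω => NP ω = false :=
    Pr_congr pr fun ω => by simp
  have h3 := Pr_add_compl pr hsum (fun ω => NP ω = true)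
  rw [hcompl] at h3
  linear_combination ((Pr pr fun ω => NU ω = u) * (Pr pr fun ω => NXn ω = nx)
    * (Pr pr fun ω => NTn ω = nt) * (Pr pr fun ω => NYn ω = ny)) * h3

lemma hindep3 (u : 𝒰) (nx : NXt) (ny : NYt) :
    Pr pr (fun ω => NU ω = u ∧ NXn ω = nx ∧ NYn ω = ny)
      = Pr pr (fun ω => NU ω = u) * Pr pr (fun ω => NXn ω = nx)
        * Pr pr (fun ω => NYn ω = ny) := by
  rw [Pr_decomp pr NTn]
  have key : ∀ nt : NTt, (Pr pr fun ω => (NU ω = u ∧ NXn ω = nx ∧ NYn ω = ny) ∧ NTn ω = nt)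
      = Pr pr (fun ω => NU ω = u) * Pr pr (fun ω => NXn ω = nx)
        * Pr pr (fun ω => NYn ω = ny) * Pr pr (fun ω => NTn ω = nt) := by
    intro nt
    rw [Pr_congr pr (B := fun ω => NU ω = u ∧ NXn ω = nx ∧ NTn ω = nt ∧ NYn ω = ny)
      (fun ω => by tauto), hindep4 pr hsum NP NU NXn NTn NYn hindep]
    ring
  rw [Finset.sum_congr rfl (fun nt _ => key nt), ← Finset.mul_sum]
  have tot : ∑ nt ∈ Finset.image NTn Finset.univ, Pr pr (fun ω => NTn ω = nt) = 1 := by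
    have h := Pr_decomp pr NTn (fun _ => True)
    rw [Pr_true pr hsum] at h
    calc ∑ nt ∈ Finset.image NTn Finset.univ, Pr pr (fun ω => NTn ω = nt)
        = ∑ nt ∈ Finset.image NTn Finset.univ, Pr pr (fun ω => True ∧ NTn ω = nt) :=
          Finset.sum_congr rfl fun nt _ => Pr_congr pr fun ω => by tauto
      _ = 1 := h.symm
  rw [tot, mul_one]

lemma indep_main (A : NTt → Prop) (B : 𝒰 → NXt → NYt → Prop) :
    Pr pr (fun ω => A (NTn ω) ∧ B (NU ω) (NXn ω) (NYn ω))
      = Pr pr (fun ω => A (NTn ω)) * Pr pr (fun ω => B (NU ω) (NXn ω) (NYn ω)) := by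
  have hB : ∀ nt : NTt, (Pr pr fun ω => B (NU ω) (NXn ω) (NYn ω) ∧ NTn ω = nt)
      = Pr pr (fun ω => NTn ω = nt) * Pr pr (fun ω => B (NU ω) (NXn ω) (NYn ω)) := by
    intro nt
    rw [Pr_decomp pr (fun ω => (NU ω, NXn ω, NYn ω))
        (fun ω => B (NU ω) (NXn ω) (NYn ω) ∧ NTn ω = nt),
      Pr_decomp pr (fun ω => (NU ω, NXn ω, NYn ω)) (fun ω => B (NU ω) (NXn ω) (NYn ω)),
      Finset.mul_sum]
    refine Finset.sum_congr rfl fun v _ => ?_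
    obtain ⟨u, nx, ny⟩ := v
    have e1 : (Pr pr fun ω => (B (NU ω) (NXn ω) (NYn ω) ∧ NTn ω = nt)
        ∧ (NU ω, NXn ω, NYn ω) = (u, nx, ny))
        = Pr pr fun ω => B u nx ny ∧ (NU ω = u ∧ NXn ω = nx ∧ NTn ω = nt ∧ NYn ω = ny) :=
      Pr_congr pr fun ω => by
        simp only [Prod.mk.injEq]
        constructor
        · rintro ⟨⟨hb, ht⟩, h1, h2, h3⟩; subst h1; subst h2; subst h3; exact ⟨hb, rfl, rfl, ht, rfl⟩
        · rintro ⟨hb, h1, h2, ht, h3⟩; subst h1; subst h2; subst h3; exact ⟨⟨hb, ht⟩, rfl, rfl, rfl⟩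
    have e2 : (Pr pr fun ω => B (NU ω) (NXn ω) (NYn ω) ∧ (NU ω, NXn ω, NYn ω) = (u, nx, ny))
        = Pr pr fun ω => B u nx ny ∧ (NU ω = u ∧ NXn ω = nx ∧ NYn ω = ny) :=
      Pr_congr pr fun ω => by
        simp only [Prod.mk.injEq]
        constructor
        · rintro ⟨hb, h1, h2, h3⟩; subst h1; subst h2; subst h3; exact ⟨hb, rfl, rfl, rfl⟩
        · rintro ⟨hb, h1, h2, h3⟩; subst h1; subst h2; subst h3; exact ⟨hb, rfl, rfl, rfl⟩
    rw [e1, e2, Pr_const_and, Pr_const_and]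
    by_cases hb : B u nx ny
    · rw [if_pos hb, if_pos hb, hindep4 pr hsum NP NU NXn NTn NYn hindep,
        hindep3 pr hsum NP NU NXn NTn NYn hindep]
      ring
    · rw [if_neg hb, if_neg hb, mul_zero]
  rw [Pr_decomp pr NTn (fun ω => A (NTn ω) ∧ B (NU ω) (NXn ω) (NYn ω)),
    Pr_decomp pr NTn (fun ω => A (NTn ω))]
  rw [Finset.sum_mul]
  refine Finset.sum_congr rfl fun nt _ => ?_
  have e1 : (Pr pr fun ω => (A (NTn ω) ∧ B (NU ω) (NXn ω) (NYn ω)) ∧ NTn ω = nt)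
      = Pr pr fun ω => A nt ∧ (B (NU ω) (NXn ω) (NYn ω) ∧ NTn ω = nt) :=
    Pr_congr pr fun ω => by
      constructor
      · rintro ⟨⟨ha, hb⟩, ht⟩; subst ht; exact ⟨ha, hb, rfl⟩
      · rintro ⟨ha, hb, ht⟩; subst ht; exact ⟨⟨ha, hb⟩, rfl⟩
  have e2 : (Pr pr fun ω => A (NTn ω) ∧ NTn ω = nt)
      = Pr pr fun ω => A nt ∧ NTn ω = nt :=
    Pr_congr pr fun ω => by
      constructor
      · rintro ⟨ha, ht⟩; subst ht; exact ⟨ha, rfl⟩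
      · rintro ⟨ha, ht⟩; subst ht; exact ⟨ha, rfl⟩
  rw [e1, e2, Pr_const_and, Pr_const_and, hB nt]
  by_cases ha : A nt
  · simp [ha]
  · simp [ha]

end Indep

/-- Proposition 2: In the non-compliance SCM, IPE(x) = ITE(x)·γ(x), where
IPE(x) = P(Y=1 | do(P:=1), X=x) − P(Y=1 | do(P:=0), X=x),
ITE(x) = P(Y=1 | do(T:=1), X=x) − P(Y=1 | do(T:=0), X=x), and
γ(x) = P(T=1 | do(P:=1), X=x). -/
theorem stmt5
    {Ω 𝒰 𝒳 NXt NTt NYt : Type*} [Fintype Ω]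
    (pr : Ω → ℝ) (hpr : ∀ ω, 0 ≤ pr ω) (hsum : ∑ ω, pr ω = 1)
    (NP : Ω → Bool) (NU : Ω → 𝒰) (NXn : Ω → NXt) (NTn : Ω → NTt) (NYn : Ω → NYt)
    (fX : 𝒰 → NXt → 𝒳) (fT : 𝒳 → NTt → Bool) (fY : 𝒳 → Bool → 𝒰 → NYt → Bool)
    (P : Ω → Bool) (hP : P = NP)
    (U : Ω → 𝒰) (hU : U = NU)
    (X : Ω → 𝒳) (hX : X = fun ω => fX (U ω) (NXn ω))
    (T : Ω → Bool) (hT : T = fun ω => fT (X ω) (NTn ω) && P ω)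
    (Y : Ω → Bool) (hY : Y = fun ω => fY (X ω) (T ω) (U ω) (NYn ω))
    (hindep : ∀ (a : Bool) (u : 𝒰) (nx : NXt) (nt : NTt) (ny : NYt),
      Pr pr (fun ω => NP ω = a ∧ NU ω = u ∧ NXn ω = nx ∧ NTn ω = nt ∧ NYn ω = ny)
        = Pr pr (fun ω => NP ω = a) * Pr pr (fun ω => NU ω = u)
          * Pr pr (fun ω => NXn ω = nx) * Pr pr (fun ω => NTn ω = nt)
          * Pr pr (fun ω => NYn ω = ny))
    (x : 𝒳)
    (hx : 0 < Pr pr (fun ω => X ω = x))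
    (hx0 : 0 < Pr pr (fun ω => X ω = x ∧ T ω = false))
    (hx1 : 0 < Pr pr (fun ω => X ω = x ∧ T ω = true)) :
    -- IPE(x)
    cPr pr (fun ω => fY (X ω) (fT (X ω) (NTn ω) && true) (U ω) (NYn ω) = true)
        (fun ω => X ω = x)
      - cPr pr (fun ω => fY (X ω) (fT (X ω) (NTn ω) && false) (U ω) (NYn ω) = true)
          (fun ω => X ω = x)
      = -- ITE(x)
        (cPr pr (fun ω => fY (X ω) true (U ω) (NYn ω) = true) (fun ω => X ω = x)
          - cPr pr (fun ω => fY (X ω) false (U ω) (NYn ω) = true) (fun ω => X ω = x))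
        * -- γ(x)
        cPr pr (fun ω => (fT (X ω) (NTn ω) && true) = true) (fun ω => X ω = x) := by
  subst hU hX
  clear hT hY hP hx0 hx1 hpr
  simp only [cPr, Bool.and_true, Bool.and_false]
  have hx' : 0 < Pr pr (fun ω => fX (U ω) (NXn ω) = x) := hx
  clear hx
  set D := Pr pr (fun ω => fX (U ω) (NXn ω) = x) with hDdef
  have hD : D ≠ 0 := ne_of_gt hx'
  set p1 := Pr pr (fun ω => fT x (NTn ω) = true) with hp1def
  set p0 := Pr pr (fun ω => fT x (NTn ω) = false) with hp0def
  set a1 := Pr pr (fun ω => fY x true (U ω) (NYn ω) = true ∧ fX (U ω) (NXn ω) = x) with ha1def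
  set a0 := Pr pr (fun ω => fY x false (U ω) (NYn ω) = true ∧ fX (U ω) (NXn ω) = x) with ha0def
  have hind := indep_main pr hsum NP U NXn NTn NYn hindep
  -- numerator of do(P:=1)
  have hN1 : (Pr pr fun ω => fY (fX (U ω) (NXn ω)) (fT (fX (U ω) (NXn ω)) (NTn ω))
      (U ω) (NYn ω) = true ∧ fX (U ω) (NXn ω) = x) = p1 * a1 + p0 * a0 := by
    rw [Pr_split pr (fun ω => fT x (NTn ω) = true)]
    have e1 : (Pr pr fun ω => fT x (NTn ω) = true ∧
        fY (fX (U ω) (NXn ω)) (fT (fX (U ω) (NXn ω)) (NTn ω)) (U ω) (NYn ω) = true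
          ∧ fX (U ω) (NXn ω) = x)
        = Pr pr fun ω => (fT x (NTn ω) = true) ∧
            (fY x true (U ω) (NYn ω) = true ∧ fX (U ω) (NXn ω) = x) := by
      refine Pr_congr pr fun ω => ?_
      constructor
      · rintro ⟨ht, hy, hxx⟩; rw [hxx, ht] at hy; exact ⟨ht, hy, hxx⟩
      · rintro ⟨ht, hy, hxx⟩; refine ⟨ht, ?_, hxx⟩; rw [hxx, ht]; exact hy
    have e0 : (Pr pr fun ω => ¬ fT x (NTn ω) = true ∧
        fY (fX (U ω) (NXn ω)) (fT (fX (U ω) (NXn ω)) (NTn ω)) (U ω) (NYn ω) = true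
          ∧ fX (U ω) (NXn ω) = x)
        = Pr pr fun ω => (fT x (NTn ω) = false) ∧
            (fY x false (U ω) (NYn ω) = true ∧ fX (U ω) (NXn ω) = x) := by
      refine Pr_congr pr fun ω => ?_
      constructor
      · rintro ⟨ht, hy, hxx⟩
        simp only [Bool.not_eq_true] at ht
        rw [hxx, ht] at hy; exact ⟨ht, hy, hxx⟩
      · rintro ⟨ht, hy, hxx⟩
        refine ⟨by simp [ht], ?_, hxx⟩
        rw [hxx, ht]
        exact hy
    rw [e1, e0,
      hind (fun nt => fT x nt = true) (fun u nx ny => fY x true u ny = true ∧ fX u nx = x),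
      hind (fun nt => fT x nt = false) (fun u nx ny => fY x false u ny = true ∧ fX u nx = x)]
  -- numerator of do(P:=0)
  have hN0 : (Pr pr fun ω => fY (fX (U ω) (NXn ω)) false (U ω) (NYn ω) = true
      ∧ fX (U ω) (NXn ω) = x) = a0 := by
    refine Pr_congr pr fun ω => ?_
    constructor
    · rintro ⟨hy, hxx⟩; rw [hxx] at hy; exact ⟨hy, hxx⟩
    · rintro ⟨hy, hxx⟩; refine ⟨?_, hxx⟩; rw [hxx]; exact hy
  have hA1 : (Pr pr fun ω => fY (fX (U ω) (NXn ω)) true (U ω) (NYn ω) = true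
      ∧ fX (U ω) (NXn ω) = x) = a1 := by
    refine Pr_congr pr fun ω => ?_
    constructor
    · rintro ⟨hy, hxx⟩; rw [hxx] at hy; exact ⟨hy, hxx⟩
    · rintro ⟨hy, hxx⟩; refine ⟨?_, hxx⟩; rw [hxx]; exact hy
  -- gamma numerator
  have hG : (Pr pr fun ω => fT (fX (U ω) (NXn ω)) (NTn ω) = true
      ∧ fX (U ω) (NXn ω) = x) = p1 * D := by
    have e : (Pr pr fun ω => fT (fX (U ω) (NXn ω)) (NTn ω) = true
        ∧ fX (U ω) (NXn ω) = x)
        = Pr pr fun ω => (fT x (NTn ω) = true) ∧ fX (U ω) (NXn ω) = x := by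
      refine Pr_congr pr fun ω => ?_
      constructor
      · rintro ⟨ht, hxx⟩; rw [hxx] at ht; exact ⟨ht, hxx⟩
      · rintro ⟨ht, hxx⟩; refine ⟨?_, hxx⟩; rw [hxx]; exact ht
    rw [e, hind (fun nt => fT x nt = true) (fun u nx _ => fX u nx = x)]
  have hp01 : p1 + p0 = 1 := by
    have hc : (Pr pr fun ω => ¬ fT x (NTn ω) = true) = p0 :=
      Pr_congr pr fun ω => by simp
    have := Pr_add_compl pr hsum (fun ω => fT x (NTn ω) = true)
    rw [hc] at this; exact this
  rw [hN1, hN0, hA1, hG]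
  have hp0 : p0 = 1 - p1 := by linarith
  rw [hp0]
  field_simp
  ring
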